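/- Let σ > 0, λ > 0, μ₁, μ₂ ∈ ℝ, and v₁ < v₂ be real numbers. Let γ be the Gaussian measure on ℝ with mean 0 and variance σ², let g(z) = (v₁·e^{(v₁ z + μ₁)/λ} + v₂·e^{(v₂ z + μ₂)/λ}) / (e^{(v₁ z + μ₁)/λ} + e^{(v₂ z + μ₂)/λ}), and let F(v) = γ({z : g(z) ≤ v}). Then for every v with v₁ < v < v₂, F is differentiable at v with derivative F'(v) = (λ/(σ·(v₂ − v)·(v − v₁)))·φ( (λ/(σ(v₁ − v₂)))·log((v₂ − v)/(v − v₁)) − (μ₁ − μ₂)/(σ(v₁ − v₂)) ), where φ(x) = (1/√(2π))·e^{−x²/2} is the standard Gaussian density. -/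

import Mathlib

open MeasureTheory ProbabilityTheory

/-- Density of the conditional expected payoff in the two-state case: the CDF
`F(v) = γ({z : g z ≤ v})` of the conditional expected payoff is differentiable
on `(v₁, v₂)` with derivative
`(λ/(σ(v₂−v)(v−v₁)))·φ((λ/(σ(v₁−v₂)))·log((v₂−v)/(v−v₁)) − (μ₁−μ₂)/(σ(v₁−v₂)))`,
where `φ` is the standard Gaussian density. -/
theorem stmt10 (σ lam μ₁ μ₂ v₁ v₂ : ℝ) (hσ : 0 < σ) (hlam : 0 < lam)
    (hv : v₁ < v₂) (v : ℝ) (hv₁ : v₁ < v) (hv₂ : v < v₂) :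
    HasDerivAt
      (fun w : ℝ => ((gaussianReal 0 ⟨σ ^ 2, sq_nonneg σ⟩)
        {z : ℝ |
          (v₁ * Real.exp ((v₁ * z + μ₁) / lam) + v₂ * Real.exp ((v₂ * z + μ₂) / lam)) /
              (Real.exp ((v₁ * z + μ₁) / lam) + Real.exp ((v₂ * z + μ₂) / lam)) ≤ w}).toReal)
      (lam / (σ * (v₂ - v) * (v - v₁)) *
        (1 / Real.sqrt (2 * Real.pi) *
          Real.exp (-(lam / (σ * (v₁ - v₂)) * Real.log ((v₂ - v) / (v - v₁))
              - (μ₁ - μ₂) / (σ * (v₁ - v₂))) ^ 2 / 2)))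
      v := by
  set V : NNReal := ⟨σ ^ 2, sq_nonneg σ⟩ with hVdef
  have hVc : (V : ℝ) = σ ^ 2 := rfl
  have hVne : V ≠ 0 := by
    intro hc
    have : (V : ℝ) = 0 := by rw [hc]; simp
    rw [hVc] at this
    exact (pow_ne_zero 2 hσ.ne') this
  have hvd : (0:ℝ) < v₂ - v₁ := sub_pos.mpr hv
  -- the transformed threshold
  set h : ℝ → ℝ := fun w => (lam * Real.log ((w - v₁) / (v₂ - w)) + μ₁ - μ₂) / (v₂ - v₁)
    with hhdef
  -- the Gaussian pdf
  set f : ℝ → ℝ := gaussianPDFReal 0 V with hfdef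
  have hcont : Continuous f := by
    rw [hfdef, gaussianPDFReal_def]
    continuity
  have hint : Integrable f := integrable_gaussianPDFReal 0 V
  -- derivative of the CDF of the Gaussian
  have hG : ∀ x : ℝ, HasDerivAt (fun y => ∫ t in Set.Iic y, f t) (f x) x := by
    intro x
    have h1 : ∀ y : ℝ, ∫ t in Set.Iic y, f t
        = (∫ t in Set.Iic (0:ℝ), f t) + ∫ t in (0:ℝ)..y, f t := by
      intro y
      rw [← intervalIntegral.integral_Iic_sub_Iic hint.integrableOn hint.integrableOn]
      ring
    have hD : HasDerivAt (fun u => ∫ t in (0:ℝ)..u, f t) (f x) x :=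
      intervalIntegral.integral_hasDerivAt_right hint.intervalIntegrable
        (hcont.stronglyMeasurableAtFilter _ _) hcont.continuousAt
    exact (hD.const_add (∫ t in Set.Iic (0:ℝ), f t)).congr_of_eventuallyEq
      (Filter.Eventually.of_forall h1)
  -- derivative of h
  have hq : HasDerivAt (fun w => (w - v₁) / (v₂ - w))
      ((1 * (v₂ - v) - (v - v₁) * (0 - 1)) / (v₂ - v) ^ 2) v :=
    HasDerivAt.div ((hasDerivAt_id v).sub_const v₁)
      ((hasDerivAt_const v v₂).sub (hasDerivAt_id v)) (sub_ne_zero.mpr hv₂.ne')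
  have hqpos : (0:ℝ) < (v - v₁) / (v₂ - v) :=
    div_pos (sub_pos.mpr hv₁) (sub_pos.mpr hv₂)
  have hlog : HasDerivAt (fun w => Real.log ((w - v₁) / (v₂ - w)))
      ((1 * (v₂ - v) - (v - v₁) * (0 - 1)) / (v₂ - v) ^ 2 / ((v - v₁) / (v₂ - v))) v :=
    hq.log hqpos.ne'
  have hh' : HasDerivAt h
      (lam * ((1 * (v₂ - v) - (v - v₁) * (0 - 1)) / (v₂ - v) ^ 2 / ((v - v₁) / (v₂ - v)))
        / (v₂ - v₁)) v :=
    (((hlog.const_mul lam).add_const μ₁).sub_const μ₂).div_const (v₂ - v₁)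
  -- composition
  have hcomp := (hG (h v)).comp v hh'
  -- eventual equality of the two functions
  have heq : (fun w : ℝ => ((gaussianReal 0 V)
        {z : ℝ |
          (v₁ * Real.exp ((v₁ * z + μ₁) / lam) + v₂ * Real.exp ((v₂ * z + μ₂) / lam)) /
              (Real.exp ((v₁ * z + μ₁) / lam) + Real.exp ((v₂ * z + μ₂) / lam)) ≤ w}).toReal)
      =ᶠ[nhds v] ((fun y => ∫ t in Set.Iic y, f t) ∘ h) := by
    filter_upwards [Ioo_mem_nhds hv₁ hv₂] with w hw
    obtain ⟨hw₁, hw₂⟩ := hw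
    have hset : {z : ℝ |
          (v₁ * Real.exp ((v₁ * z + μ₁) / lam) + v₂ * Real.exp ((v₂ * z + μ₂) / lam)) /
              (Real.exp ((v₁ * z + μ₁) / lam) + Real.exp ((v₂ * z + μ₂) / lam)) ≤ w}
        = Set.Iic (h w) := by
      ext z
      simp only [Set.mem_setOf_eq, Set.mem_Iic]
      set a := (v₁ * z + μ₁) / lam with hadef
      set b := (v₂ * z + μ₂) / lam with hbdef
      have hea : (0:ℝ) < Real.exp a := Real.exp_pos a
      have heb : (0:ℝ) < Real.exp b := Real.exp_pos b
      have hden : (0:ℝ) < Real.exp a + Real.exp b := by positivity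
      have hR : (0:ℝ) < (w - v₁) / (v₂ - w) :=
        div_pos (sub_pos.mpr hw₁) (sub_pos.mpr hw₂)
      rw [div_le_iff₀ hden]
      constructor
      · intro H
        have H2 : (v₂ - w) * Real.exp b ≤ (w - v₁) * Real.exp a := by nlinarith
        have H3 : Real.exp b / Real.exp a ≤ (w - v₁) / (v₂ - w) := by
          rw [div_le_div_iff₀ hea (sub_pos.mpr hw₂)]
          nlinarith
        rw [← Real.exp_sub] at H3
        have H4 : b - a ≤ Real.log ((w - v₁) / (v₂ - w)) :=
          (Real.le_log_iff_exp_le hR).mpr H3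
        have hba : b - a = ((v₂ - v₁) * z + (μ₂ - μ₁)) / lam := by
          rw [hadef, hbdef, div_sub_div_same]; ring_nf
        rw [hba, div_le_iff₀ hlam] at H4
        rw [hhdef]
        rw [le_div_iff₀ hvd]
        nlinarith
      · intro H
        rw [hhdef, le_div_iff₀ hvd] at H
        have H4 : ((v₂ - v₁) * z + (μ₂ - μ₁)) / lam ≤ Real.log ((w - v₁) / (v₂ - w)) := by
          rw [div_le_iff₀ hlam]
          nlinarith
        have hba : b - a = ((v₂ - v₁) * z + (μ₂ - μ₁)) / lam := by
          rw [hadef, hbdef, div_sub_div_same]; ring_nf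
        rw [← hba] at H4
        have H3 : Real.exp (b - a) ≤ (w - v₁) / (v₂ - w) :=
          (Real.le_log_iff_exp_le hR).mp H4
        rw [Real.exp_sub, div_le_div_iff₀ hea (sub_pos.mpr hw₂)] at H3
        nlinarith
    rw [hset, gaussianReal_apply_eq_integral _ hVne, ENNReal.toReal_ofReal
      (integral_nonneg (gaussianPDFReal_nonneg _ _))]
    rfl
  have hFinal := hcomp.congr_of_eventuallyEq heq
  convert hFinal using 1
  case e'_4 => rfl
  case e'_5 => rfl
  -- now prove the derivative values agree
  have hπ : (0:ℝ) < Real.sqrt (2 * Real.pi) := Real.sqrt_pos.mpr (by positivity)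
  have hXeq : lam / (σ * (v₁ - v₂)) * Real.log ((v₂ - v) / (v - v₁))
      - (μ₁ - μ₂) / (σ * (v₁ - v₂)) = h v / σ := by
    rw [show (v₂ - v) / (v - v₁) = ((v - v₁) / (v₂ - v))⁻¹ from (inv_div _ _).symm,
      Real.log_inv, hhdef]
    have h1 : v₁ - v₂ ≠ 0 := sub_ne_zero.mpr hv.ne
    have h2 : v₂ - v₁ ≠ 0 := sub_ne_zero.mpr hv.ne'
    field_simp
    ring
  rw [hXeq]
  simp only [hfdef, gaussianPDFReal, hVc]
  have hsq : Real.sqrt (2 * Real.pi * σ ^ 2) = Real.sqrt (2 * Real.pi) * σ := by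
    rw [Real.sqrt_mul (by positivity), Real.sqrt_sq hσ.le]
  rw [hsq]
  have hexp : -(h v / σ) ^ 2 / 2 = -(h v - 0) ^ 2 / (2 * σ ^ 2) := by
    rw [sub_zero]
    ring
  rw [hexp]
  have h1 : v - v₁ ≠ 0 := sub_ne_zero.mpr hv₁.ne'
  have h2 : v₂ - v ≠ 0 := sub_ne_zero.mpr hv₂.ne'
  have h3 : v₂ - v₁ ≠ 0 := sub_ne_zero.mpr hv.ne'
  field_simp
  ring
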